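/- arXiv:1501.00816 — 3 statements merged into one kernel-verified Lean document; each statement's English description precedes it below -/
import Mathlib

section
/- Let N > 2, α ≥ 2, β > α − 2, and let λ₀ < 0. Suppose ψ : ℝ^N → ℝ is a strictly positive, bounded, radial C² function with ψ(x) → 0 as |x| → ∞ which satisfies (1+|x|^α)Δψ(x) − |x|^β ψ(x) = λ₀ ψ(x) for all x ∈ ℝ^N. Then there exists a constant C₁ > 0 such that ψ(x) ≥ C₁ |x|^{−(N−1)/2 − (β−α)/4} exp(−(2/(β−α+2)) |x|^{(β−α+2)/2}) for all x ∈ ℝ^N with |x| ≥ 1. -/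
open MeasureTheory Filter Real

/-- The Laplacian of a function on `ℝ^N`. -/
noncomputable def laplacian {N : ℕ} (f : EuclideanSpace ℝ (Fin N) → ℝ)
    (x : EuclideanSpace ℝ (Fin N)) : ℝ :=
  ∑ i : Fin N, iteratedFDeriv ℝ 2 f x ![EuclideanSpace.single i 1, EuclideanSpace.single i 1]

section Aux
open Set Filter Real

/- ### 1-D calculus toolkit -/

noncomputable def term (σ m C p : ℝ) (t : ℝ) : ℝ := C * t ^ p * Real.exp (-σ * t ^ m)

lemma hasDerivAt_term (σ m C p : ℝ) {t : ℝ} (ht : 0 < t) :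
    HasDerivAt (term σ m C p)
      ((C * p * t ^ (p - 1) + (-σ * m * C) * t ^ (m + p - 1)) * Real.exp (-σ * t ^ m)) t := by
  have h1 : HasDerivAt (fun t : ℝ => C * t ^ p) (C * (p * t ^ (p - 1))) t :=
    (Real.hasDerivAt_rpow_const (Or.inl (ne_of_gt ht))).const_mul C
  have h2 : HasDerivAt (fun t : ℝ => Real.exp (-σ * t ^ m))
      (Real.exp (-σ * t ^ m) * (-σ * (m * t ^ (m - 1)))) t :=
    ((Real.hasDerivAt_rpow_const (Or.inl (ne_of_gt ht))).const_mul (-σ)).exp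
  have := h1.mul h2
  refine this.congr_deriv ?_
  have e1 : t ^ (m + p - 1) = t ^ p * t ^ (m - 1) := by
    rw [← Real.rpow_add ht]; ring_nf
  rw [e1]; ring

lemma continuousAt_term (σ m C p : ℝ) {t : ℝ} (ht : 0 < t) :
    ContinuousAt (term σ m C p) t :=
  (hasDerivAt_term σ m C p ht).differentiableAt.continuousAt

noncomputable def hb (σ m B : ℝ) (t : ℝ) : ℝ := term σ m 1 (-B) t

noncomputable def hb1 (σ m B : ℝ) (t : ℝ) : ℝ :=
  term σ m (-B) (-B-1) t + term σ m (-(σ*m)) (m-B-1) t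

noncomputable def hb2 (σ m B : ℝ) (t : ℝ) : ℝ :=
  term σ m (B*(B+1)) (-B-2) t + term σ m (σ*m*(2*B-m+1)) (m-B-2) t
    + term σ m (σ^2*m^2) (2*m-B-2) t

lemma hb_pos (σ m B : ℝ) {t : ℝ} (ht : 0 < t) : 0 < hb σ m B t := by
  unfold hb term
  have := Real.rpow_pos_of_pos ht (-B)
  positivity

lemma hasDerivAt_hb (σ m B : ℝ) {t : ℝ} (ht : 0 < t) :
    HasDerivAt (hb σ m B) (hb1 σ m B t) t := by
  have := hasDerivAt_term σ m 1 (-B) ht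
  refine this.congr_deriv ?_
  unfold hb1 term
  rw [show m + -B - 1 = m - B - 1 by ring]
  ring

lemma hasDerivAt_hb1 (σ m B : ℝ) {t : ℝ} (ht : 0 < t) :
    HasDerivAt (hb1 σ m B) (hb2 σ m B t) t := by
  have h1 := hasDerivAt_term σ m (-B) (-B-1) ht
  have h2 := hasDerivAt_term σ m (-(σ*m)) (m-B-1) ht
  have := h1.add h2
  refine this.congr_deriv ?_
  unfold hb2 term
  rw [show -B - 1 - 1 = -B-2 by ring, show m + (-B - 1) - 1 = m-B-2 by ring,
    show m - B - 1 - 1 = m-B-2 by ring, show m + (m - B - 1) - 1 = 2*m-B-2 by ring]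
  ring

lemma continuousAt_hb2 (σ m B : ℝ) {t : ℝ} (ht : 0 < t) :
    ContinuousAt (hb2 σ m B) t :=
  ((continuousAt_term _ _ _ _ ht).add (continuousAt_term _ _ _ _ ht)).add
    (continuousAt_term _ _ _ _ ht)

lemma t_mul_rpow {t : ℝ} (ht : 0 < t) (q : ℝ) : t * t ^ q = t ^ (q + 1) := by
  rw [show q + 1 = 1 + q by ring, Real.rpow_add ht, Real.rpow_one]

lemma lap_combo (σ m B Nr : ℝ) {t : ℝ} (ht : 0 < t) :
    4*t*hb2 σ m B t + 2*Nr*hb1 σ m B t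
      = ((4*B*(B+1) - 2*Nr*B) * t^(-B-1) + (σ*m*(4*(2*B-m+1) - 2*Nr)) * t^(m-B-1)
          + 4*σ^2*m^2 * t^(2*m-B-1)) * Real.exp (-σ*t^m) := by
  unfold hb2 hb1 term
  have e1 : t * t ^ (-B-2) = t ^ (-B-1) := by
    rw [t_mul_rpow ht, show -B-2+1 = -B-1 by ring]
  have e2 : t * t ^ (m-B-2) = t ^ (m-B-1) := by
    rw [t_mul_rpow ht, show m-B-2+1 = m-B-1 by ring]
  have e3 : t * t ^ (2*m-B-2) = t ^ (2*m-B-1) := by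
    rw [t_mul_rpow ht, show 2*m-B-2+1 = 2*m-B-1 by ring]
  linear_combination (4*(B*(B+1))*Real.exp (-σ*t^m)) * e1
    + (4*(σ*m*(2*B-m+1))*Real.exp (-σ*t^m)) * e2
    + (4*(σ^2*m^2)*Real.exp (-σ*t^m)) * e3

set_option maxHeartbeats 2000000 in
lemma key_ineq (Nr α β lam0 σ m A : ℝ)
    (hm : 0 < m) (hσm : σ * m = 1/2)
    (hA : 4*A = Nr + 2*m - 2)
    (hβm : β/2 = 2*m - 1 + α/2)
    (hlam0 : lam0 < 0)
    {T₀ t : ℝ} (hT₀ : 1 ≤ T₀) (ht : T₀ ≤ t)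
    {c c' : ℝ} (hc : c = 4*A*(A+1) - 2*Nr*A) (hc' : c' = 4*(A+m/2)*((A+m/2)+1) - 2*Nr*(A+m/2))
    (Hc : |c| * T₀^(-(m/2)) ≤ m)
    (Hc' : |c'| * T₀^(-m) ≤ m) :
    (lam0 + t^(β/2)) * (hb σ m A t + hb σ m (A+m/2) t)
      ≤ (1 + t^(α/2)) * ((4*t*hb2 σ m A t + 2*Nr*hb1 σ m A t)
          + (4*t*hb2 σ m (A+m/2) t + 2*Nr*hb1 σ m (A+m/2) t)) := by
  have hT0pos : (0:ℝ) < T₀ := by linarith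
  have ht0 : (0:ℝ) < t := by linarith
  have GA := lap_combo σ m A Nr ht0
  have GB := lap_combo σ m (A+m/2) Nr ht0
  rw [← hc] at GA
  rw [← hc'] at GB
  have hz1 : σ*m*(4*(2*A-m+1) - 2*Nr) = 0 := by rw [hσm]; linarith
  have hz2 : σ*m*(4*(2*(A+m/2)-m+1) - 2*Nr) = 2*m := by rw [hσm]; linarith
  have hz3 : 4*σ^2*m^2 = 1 := by linear_combination (4*(σ*m)+2)*hσm
  rw [hz1, hz3] at GA
  rw [hz2, hz3] at GB
  rw [GA, GB]
  set e := Real.exp (-σ*t^m) with he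
  have hepos : 0 < e := Real.exp_pos _
  -- exponent bookkeeping
  have E1 : t^(m-(A+m/2)-1) * t^(-(m/2)) = t^(-A-1) := by
    rw [← Real.rpow_add ht0]; congr 1; ring
  have E2 : t^(m-(A+m/2)-1) * t^(-m) = t^(-(A+m/2)-1) := by
    rw [← Real.rpow_add ht0]; congr 1; ring
  have E3 : t^(α/2) * t^(2*m-A-1) = t^(β/2) * t^(-A) := by
    rw [← Real.rpow_add ht0, ← Real.rpow_add ht0]; congr 1; linarith
  have E4 : t^(α/2) * t^(2*m-(A+m/2)-1) = t^(β/2) * t^(-(A+m/2)) := by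
    rw [← Real.rpow_add ht0, ← Real.rpow_add ht0]; congr 1; linarith
  -- the correction term is nonnegative
  have hXle : t^(-(m/2)) ≤ T₀^(-(m/2)) :=
    Real.rpow_le_rpow_of_nonpos hT0pos ht (by linarith)
  have hYle : t^(-m) ≤ T₀^(-m) :=
    Real.rpow_le_rpow_of_nonpos hT0pos ht (by linarith)
  have hXpos : 0 < t^(-(m/2)) := Real.rpow_pos_of_pos ht0 _
  have hYpos : 0 < t^(-m) := Real.rpow_pos_of_pos ht0 _
  have I1 : 0 ≤ c * t^(-(m/2)) + c' * t^(-m) + 2*m := by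
    have b1 : -(|c| * t^(-(m/2))) ≤ c * t^(-(m/2)) := by
      nlinarith [neg_abs_le c, hXpos]
    have b2 : -(|c'| * t^(-m)) ≤ c' * t^(-m) := by
      nlinarith [neg_abs_le c', hYpos]
    have b3 : |c| * t^(-(m/2)) ≤ |c| * T₀^(-(m/2)) :=
      mul_le_mul_of_nonneg_left hXle (abs_nonneg c)
    have b4 : |c'| * t^(-m) ≤ |c'| * T₀^(-m) :=
      mul_le_mul_of_nonneg_left hYle (abs_nonneg c')
    nlinarith
  have hPpos : 0 < t^(m-(A+m/2)-1) * e := by positivity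
  have S1 : 0 ≤ (1 + t^(α/2)) * ((c * t^(-(m/2)) + c' * t^(-m) + 2*m) * (t^(m-(A+m/2)-1) * e)) := by
    have : (0:ℝ) < 1 + t^(α/2) := by positivity
    exact mul_nonneg this.le (mul_nonneg I1 hPpos.le)
  have S2 : (c * t^(-(m/2)) + c' * t^(-m) + 2*m) * (t^(m-(A+m/2)-1) * e)
      = c * t^(-A-1) * e + c' * t^(-(A+m/2)-1) * e + 2*m * (t^(m-(A+m/2)-1) * e) := by
    linear_combination (c*e) * E1 + (c'*e) * E2
  have tApos : 0 < t^(-A) := Real.rpow_pos_of_pos ht0 _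
  have tBpos : 0 < t^(-(A+m/2)) := Real.rpow_pos_of_pos ht0 _
  have t3pos : 0 < t^(2*m-A-1) := Real.rpow_pos_of_pos ht0 _
  have t4pos : 0 < t^(2*m-(A+m/2)-1) := Real.rpow_pos_of_pos ht0 _
  have hml : (0:ℝ) < -lam0 := by linarith
  have S3' : (lam0 + t^(β/2)) * (t^(-A) + t^(-(A+m/2)))
      ≤ (1 + t^(α/2)) * (t^(2*m-A-1) + t^(2*m-(A+m/2)-1)) := by
    nlinarith [E3, E4, t3pos, t4pos, mul_pos hml tApos, mul_pos hml tBpos]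
  have S3 : (lam0 + t^(β/2)) * (hb σ m A t + hb σ m (A+m/2) t)
      ≤ (1 + t^(α/2)) * ((t^(2*m-A-1) + t^(2*m-(A+m/2)-1)) * e) :=
    calc (lam0 + t^(β/2)) * (hb σ m A t + hb σ m (A+m/2) t)
        = ((lam0 + t^(β/2)) * (t^(-A) + t^(-(A+m/2)))) * e := by unfold hb term; ring
      _ ≤ ((1 + t^(α/2)) * (t^(2*m-A-1) + t^(2*m-(A+m/2)-1))) * e :=
          mul_le_mul_of_nonneg_right S3' hepos.le
      _ = (1 + t^(α/2)) * ((t^(2*m-A-1) + t^(2*m-(A+m/2)-1)) * e) := by ring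
  have S4 : (t^(2*m-A-1) + t^(2*m-(A+m/2)-1)) * e
        + (c * t^(-(m/2)) + c' * t^(-m) + 2*m) * (t^(m-(A+m/2)-1) * e)
      = (c * t^(-A-1) + 1 * t^(2*m-A-1)) * e
        + (c' * t^(-(A+m/2)-1) + 2*m * t^(m-(A+m/2)-1) + 1 * t^(2*m-(A+m/2)-1)) * e := by
    linear_combination S2
  calc (lam0 + t^(β/2)) * (hb σ m A t + hb σ m (A+m/2) t)
      ≤ (1 + t^(α/2)) * ((t^(2*m-A-1) + t^(2*m-(A+m/2)-1)) * e) := S3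
    _ ≤ (1 + t^(α/2)) * ((t^(2*m-A-1) + t^(2*m-(A+m/2)-1)) * e)
        + (1 + t^(α/2)) * ((c * t^(-(m/2)) + c' * t^(-m) + 2*m) * (t^(m-(A+m/2)-1) * e)) := by
        linarith
    _ = (1 + t^(α/2)) * ((t^(2*m-A-1) + t^(2*m-(A+m/2)-1)) * e
        + (c * t^(-(m/2)) + c' * t^(-m) + 2*m) * (t^(m-(A+m/2)-1) * e)) := by ring
    _ = (1 + t^(α/2)) * ((c * t^(-A-1) + 0 * t^(m-A-1) + 1 * t^(2*m-A-1)) * e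
          + (c' * t^(-(A+m/2)-1) + 2*m * t^(m-(A+m/2)-1) + 1 * t^(2*m-(A+m/2)-1)) * e) := by
        rw [S4]; ring

lemma secondDerivTest {g g' g'' : ℝ → ℝ} {η : ℝ} (hη : 0 < η)
    (h1 : ∀ s ∈ Set.Ioo (-η) η, HasDerivAt g (g' s) s)
    (h2 : ∀ s ∈ Set.Ioo (-η) η, HasDerivAt g' (g'' s) s)
    (hcont : ContinuousAt g'' 0)
    (hmax : IsLocalMax g 0) : g'' 0 ≤ 0 := by
  by_contra hc
  push_neg at hc
  have h0 : (0:ℝ) ∈ Set.Ioo (-η) η := by constructor <;> simp [hη]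
  have hg'0 : g' 0 = 0 := hmax.hasDerivAt_eq_zero (h1 0 h0)
  have hev : ∀ᶠ s in nhds (0:ℝ), 0 < g'' s := hcont.eventually (eventually_gt_nhds hc)
  obtain ⟨η₁, hη₁, hball⟩ := Metric.eventually_nhds_iff_ball.1 hev
  set η₂ := min η₁ η with hdef
  have hη₂ : 0 < η₂ := lt_min hη₁ hη
  have hle : η₂ ≤ η := min_le_right _ _
  have hle1 : η₂ ≤ η₁ := min_le_left _ _
  have hsub : Set.Icc (0:ℝ) (η₂/2) ⊆ Set.Ioo (-η) η := by
    intro s hs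
    constructor
    · linarith [hs.1]
    · nlinarith [hs.2, hs.1]
  have hsub1 : Set.Icc (0:ℝ) (η₂/2) ⊆ Metric.ball 0 η₁ := by
    intro s hs
    simp only [Metric.mem_ball, Real.dist_eq, sub_zero]
    rw [abs_of_nonneg hs.1]; linarith [hs.2]
  -- g' is strictly monotone on Icc 0 (η₂/2)
  have hg'mono : StrictMonoOn g' (Set.Icc 0 (η₂/2)) := by
    apply strictMonoOn_of_deriv_pos (convex_Icc _ _)
    · exact fun s hs => ((h2 s (hsub hs)).differentiableAt).continuousAt.continuousWithinAt
    · intro s hs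
      rw [interior_Icc] at hs
      rw [(h2 s (hsub ⟨le_of_lt hs.1, le_of_lt hs.2⟩)).deriv]
      exact hball s (hsub1 ⟨le_of_lt hs.1, le_of_lt hs.2⟩)
  have hg'pos : ∀ s ∈ Set.Ioo (0:ℝ) (η₂/2), 0 < g' s := by
    intro s hs
    have := hg'mono (Set.left_mem_Icc.2 (by linarith [hs.2])) ⟨le_of_lt hs.1, le_of_lt hs.2⟩ hs.1
    rwa [hg'0] at this
  have hgmono : StrictMonoOn g (Set.Icc 0 (η₂/2)) := by
    apply strictMonoOn_of_deriv_pos (convex_Icc _ _)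
    · exact fun s hs => ((h1 s (hsub hs)).differentiableAt).continuousAt.continuousWithinAt
    · intro s hs
      rw [interior_Icc] at hs
      rw [(h1 s (hsub ⟨le_of_lt hs.1, le_of_lt hs.2⟩)).deriv]
      exact hg'pos s hs
  obtain ⟨ε, hε, hballmax⟩ := Metric.eventually_nhds_iff_ball.1 hmax
  set s := min (ε/2) (η₂/2) with hsdef
  have hs0 : 0 < s := lt_min (by linarith) (by linarith)
  have h1' : g 0 < g s := hgmono (Set.left_mem_Icc.2 (by positivity))
    ⟨le_of_lt hs0, min_le_right _ _⟩ hs0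
  have h2' : g s ≤ g 0 := hballmax s (by
    simp only [Metric.mem_ball, Real.dist_eq, sub_zero]
    rw [abs_of_nonneg (le_of_lt hs0)]
    calc s ≤ ε/2 := min_le_left _ _
    _ < ε := by linarith)
  linarith

variable {E : Type*} [NormedAddCommGroup E] [NormedSpace ℝ E]

lemma line_hasDerivAt (ψ : E → ℝ) (hs : ContDiff ℝ 2 ψ) (x v : E) (s : ℝ) :
    HasDerivAt (fun s => ψ (x + s • v)) (fderiv ℝ ψ (x + s • v) v) s := by
  have hline : HasDerivAt (fun s : ℝ => x + s • v) v s := by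
    simpa using ((hasDerivAt_id s).smul_const v).const_add x
  have hψ : HasFDerivAt ψ (fderiv ℝ ψ (x + s • v)) (x + s • v) :=
    (hs.differentiable (by norm_num)).differentiableAt.hasFDerivAt
  exact hψ.comp_hasDerivAt s hline

lemma line_hasDerivAt2 (ψ : E → ℝ) (hs : ContDiff ℝ 2 ψ) (x v : E) (s : ℝ) :
    HasDerivAt (fun s => fderiv ℝ ψ (x + s • v) v)
      (fderiv ℝ (fderiv ℝ ψ) (x + s • v) v v) s := by
  have hline : HasDerivAt (fun s : ℝ => x + s • v) v s := by
    simpa using ((hasDerivAt_id s).smul_const v).const_add x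
  have hF : ContDiff ℝ 1 (fderiv ℝ ψ) := hs.fderiv_right (by norm_num)
  have hF' : HasFDerivAt (fderiv ℝ ψ) (fderiv ℝ (fderiv ℝ ψ) (x + s • v)) (x + s • v) :=
    (hF.differentiable (by norm_num)).differentiableAt.hasFDerivAt
  have hc : HasDerivAt (fun s : ℝ => fderiv ℝ ψ (x + s • v))
      (fderiv ℝ (fderiv ℝ ψ) (x + s • v) v) s := by
    exact hF'.comp_hasDerivAt s hline
  exact hc.clm_apply (hasDerivAt_const _ _) |>.congr_deriv (by simp)



lemma norm_rpow_two_eq_sum {N : ℕ} (x : EuclideanSpace ℝ (Fin N)) :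
    ‖x‖ ^ (2:ℝ) = ∑ i, (x i)^2 := by
  rw [show ((2:ℝ)) = ((2:ℕ):ℝ) by norm_num, Real.rpow_natCast, EuclideanSpace.norm_eq,
    Real.sq_sqrt (Finset.sum_nonneg fun i _ => sq_nonneg _)]
  simp [Real.norm_eq_abs, sq_abs]

lemma norm_line_sq {N : ℕ} (x : EuclideanSpace ℝ (Fin N)) (i : Fin N) (s : ℝ) :
    ‖x + s • EuclideanSpace.single i (1:ℝ)‖ ^ (2:ℝ)
      = ‖x‖ ^ (2:ℝ) + 2*s*(x i) + s^2 := by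
  have h2 : ∀ y : EuclideanSpace ℝ (Fin N), ‖y‖ ^ (2:ℝ) = ‖y‖^2 := fun y => by
    rw [show ((2:ℝ)) = ((2:ℕ):ℝ) by norm_num, Real.rpow_natCast]
  rw [h2, h2, norm_add_sq_real, real_inner_smul_right, norm_smul]
  have hi : (inner ℝ x (EuclideanSpace.single i (1:ℝ)) : ℝ) = x i := by
    simp [EuclideanSpace.inner_single_right]
  rw [hi]
  simp [EuclideanSpace.norm_single, Real.norm_eq_abs, mul_pow, sq_abs]
  ring

lemma laplacian_eq_sum_d2 {N : ℕ} (ψ : EuclideanSpace ℝ (Fin N) → ℝ) (x : EuclideanSpace ℝ (Fin N)) :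
    laplacian ψ x = ∑ i, fderiv ℝ (fderiv ℝ ψ) x (EuclideanSpace.single i 1)
      (EuclideanSpace.single i 1) := by
  unfold laplacian
  refine Finset.sum_congr rfl fun i _ => ?_
  rw [iteratedFDeriv_two_apply]
  simp

end Aux

set_option maxHeartbeats 4000000 in
/-- Lower bound for the ground state of `A = (1+|x|^α)Δ - |x|^β`. -/
theorem ground_state_lower_bound
    (N : ℕ) (hN : 2 < N) (α β lam0 : ℝ) (hα : 2 ≤ α) (hβ : α - 2 < β) (hlam0 : lam0 < 0)
    (ψ : EuclideanSpace ℝ (Fin N) → ℝ)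
    (hpos : ∀ x, 0 < ψ x)
    (hbdd : ∃ M : ℝ, ∀ x, ψ x ≤ M)
    (hrad : ∀ x y : EuclideanSpace ℝ (Fin N), ‖x‖ = ‖y‖ → ψ x = ψ y)
    (hsmooth : ContDiff ℝ 2 ψ)
    (hdecay : Tendsto ψ (cocompact _) (nhds 0))
    (heigen : ∀ x : EuclideanSpace ℝ (Fin N),
      (1 + ‖x‖ ^ α) * laplacian ψ x - ‖x‖ ^ β * ψ x = lam0 * ψ x) :
    ∃ C₁ > 0, ∀ x : EuclideanSpace ℝ (Fin N), 1 ≤ ‖x‖ →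
      C₁ * ‖x‖ ^ (-(((N : ℝ) - 1) / 2) - (β - α) / 4) *
        Real.exp (-(2 / (β - α + 2)) * ‖x‖ ^ ((β - α + 2) / 2)) ≤ ψ x := by
  classical
  have hN3 : (3:ℝ) ≤ (N:ℝ) := by exact_mod_cast hN
  have hβα2 : (0:ℝ) < β - α + 2 := by linarith
  have hβpos : 0 < β := by linarith
  obtain ⟨σ, hσ⟩ : ∃ σ:ℝ, σ = 2/(β-α+2) := ⟨_, rfl⟩
  obtain ⟨m, hm'⟩ : ∃ m:ℝ, m = (β-α+2)/4 := ⟨_, rfl⟩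
  obtain ⟨A, hA'⟩ : ∃ A:ℝ, A = ((N:ℝ)-1)/4 + (β-α)/8 := ⟨_, rfl⟩
  have hm : 0 < m := by rw [hm']; linarith
  have hσpos : 0 < σ := by rw [hσ]; positivity
  have hσm : σ * m = 1/2 := by rw [hσ, hm']; field_simp; norm_num
  have hAeq : 4*A = (N:ℝ) + 2*m - 2 := by rw [hA', hm']; ring
  have hβm : β/2 = 2*m - 1 + α/2 := by rw [hm']; ring
  have hApos : 0 < A := by rw [hA']; linarith
  have hABpos : 0 < A + m/2 := by linarith
  obtain ⟨c, hc⟩ : ∃ c:ℝ, c = 4*A*(A+1) - 2*(N:ℝ)*A := ⟨_, rfl⟩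
  obtain ⟨c', hc'⟩ : ∃ c':ℝ, c' = 4*(A+m/2)*((A+m/2)+1) - 2*(N:ℝ)*(A+m/2) := ⟨_, rfl⟩
  -- Choose the comparison radius R
  have hevT : ∀ᶠ T in atTop, ((1:ℝ) ≤ T ∧ |c| * T^(-(m/2)) ≤ m ∧ |c'| * T^(-m) ≤ m
      ∧ -lam0 < T^(β/2)) := by
    have e1 : ∀ᶠ T in (atTop : Filter ℝ), (1:ℝ) ≤ T := eventually_ge_atTop 1
    have e2 : ∀ᶠ T in (atTop:Filter ℝ), |c| * T^(-(m/2)) ≤ m := by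
      have h0 := (tendsto_rpow_neg_atTop (by linarith : 0 < m/2)).const_mul |c|
      rw [mul_zero] at h0
      exact (h0.eventually_lt_const hm).mono (fun x hx => le_of_lt hx)
    have e3 : ∀ᶠ T in (atTop:Filter ℝ), |c'| * T^(-m) ≤ m := by
      have h0 := (tendsto_rpow_neg_atTop hm).const_mul |c'|
      rw [mul_zero] at h0
      exact (h0.eventually_lt_const hm).mono (fun x hx => le_of_lt hx)
    have e4 : ∀ᶠ T in (atTop:Filter ℝ), -lam0 < T^(β/2) :=
      (tendsto_rpow_atTop (by linarith : 0 < β/2)).eventually_gt_atTop (-lam0)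
    exact e1.and (e2.and (e3.and e4))
  have hsq : Tendsto (fun r : ℝ => r^(2:ℝ)) atTop atTop :=
    tendsto_rpow_atTop (by norm_num)
  obtain ⟨R, hR1, hT1, hcT, hc'T, hlamT⟩ : ∃ R:ℝ, 1 ≤ R ∧ (1:ℝ) ≤ R^(2:ℝ)
      ∧ |c| * (R^(2:ℝ))^(-(m/2)) ≤ m ∧ |c'| * (R^(2:ℝ))^(-m) ≤ m
      ∧ -lam0 < (R^(2:ℝ))^(β/2) := by
    obtain ⟨R, h1, h2, h3, h4, h5⟩ :=
      ((eventually_ge_atTop (1:ℝ)).and (hsq.eventually hevT)).exists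
    exact ⟨R, h1, h2, h3, h4, h5⟩
  have hRpos : (0:ℝ) < R := by linarith
  obtain ⟨T₀, hT₀⟩ : ∃ T₀:ℝ, T₀ = R^(2:ℝ) := ⟨_, rfl⟩
  rw [← hT₀] at hT1 hcT hc'T hlamT
  have hT₀pos : 0 < T₀ := by linarith
  -- the comparison function
  obtain ⟨V, hV⟩ : ∃ V : EuclideanSpace ℝ (Fin N) → ℝ,
      V = fun x => hb σ m A (‖x‖^(2:ℝ)) + hb σ m (A+m/2) (‖x‖^(2:ℝ)) := ⟨_, rfl⟩
  have hVpos : ∀ x : EuclideanSpace ℝ (Fin N), x ≠ 0 → 0 < V x := by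
    intro x hx
    have h0 : 0 < ‖x‖^(2:ℝ) := Real.rpow_pos_of_pos (norm_pos_iff.2 hx) _
    rw [hV]
    exact add_pos (hb_pos σ m A h0) (hb_pos σ m (A+m/2) h0)
  -- the unit vector and sphere value of ψ
  obtain ⟨e₀, he₀⟩ : ∃ e₀ : EuclideanSpace ℝ (Fin N),
      e₀ = EuclideanSpace.single (⟨0, by omega⟩ : Fin N) (1:ℝ) := ⟨_, rfl⟩
  have he₀n : ‖e₀‖ = 1 := by rw [he₀]; simp
  have hsphereval : ∀ x : EuclideanSpace ℝ (Fin N), ψ x = ψ (‖x‖ • e₀) := fun x =>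
    hrad x _ (by rw [norm_smul, he₀n, Real.norm_eq_abs, abs_norm, mul_one])
  obtain ⟨hT, hhT⟩ : ∃ hT:ℝ, hT = hb σ m A T₀ + hb σ m (A+m/2) T₀ := ⟨_, rfl⟩
  have hhTpos : 0 < hT := by
    rw [hhT]; exact add_pos (hb_pos σ m A hT₀pos) (hb_pos σ m (A+m/2) hT₀pos)
  have hVR : ∀ x : EuclideanSpace ℝ (Fin N), ‖x‖ = R → V x = hT := by
    intro x hx
    have h2 : ‖x‖^(2:ℝ) = T₀ := by rw [hx, hT₀]
    simp only [hV, hhT, h2]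
  obtain ⟨uR, huR⟩ : ∃ u:ℝ, u = ψ (R • e₀) := ⟨_, rfl⟩
  have huRpos : 0 < uR := by rw [huR]; exact hpos _
  obtain ⟨ε, hε⟩ : ∃ ε:ℝ, ε = uR / (2 * hT) := ⟨_, rfl⟩
  have hεpos : 0 < ε := by rw [hε]; positivity
  have hsphere : ∀ x : EuclideanSpace ℝ (Fin N), ‖x‖ = R → ε * V x < ψ x := by
    intro x hx
    rw [hVR x hx, hε]
    have hψx : ψ x = uR := by
      rw [hsphereval x, hx, huR]
    rw [hψx]
    have hTne : hT ≠ 0 := ne_of_gt hhTpos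
    have h3 : uR / (2 * hT) * hT = uR / 2 := by
      field_simp
    rw [h3]
    linarith
  -- decay of the comparison function
  have hnsqc : Continuous (fun x : EuclideanSpace ℝ (Fin N) => ‖x‖^(2:ℝ)) :=
    continuous_norm.rpow_const (fun _ => Or.inr (by norm_num))
  have hhb0 : ∀ B:ℝ, 0 < B → Tendsto (hb σ m B) atTop (nhds 0) := by
    intro B hB
    apply squeeze_zero' (g := fun t => t^(-B))
    · filter_upwards [eventually_gt_atTop (0:ℝ)] with t ht
      exact (hb_pos σ m B ht).le
    · filter_upwards [eventually_ge_atTop (0:ℝ)] with t ht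
      unfold hb term
      rw [one_mul]
      apply mul_le_of_le_one_right (Real.rpow_nonneg ht _)
      apply Real.exp_le_one_iff.2
      have h4 : 0 ≤ σ * t^m := mul_nonneg hσpos.le (Real.rpow_nonneg ht _)
      linarith
    · exact tendsto_rpow_neg_atTop hB
  have hVdecay : Tendsto V (cocompact (EuclideanSpace ℝ (Fin N))) (nhds 0) := by
    have hnt : Tendsto (fun x : EuclideanSpace ℝ (Fin N) => ‖x‖^(2:ℝ))
        (cocompact _) atTop := (tendsto_rpow_atTop (by norm_num : (0:ℝ) < 2)).comp
          tendsto_norm_cocompact_atTop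
    rw [hV]
    have h5 := ((hhb0 A hApos).comp hnt).add ((hhb0 (A+m/2) hABpos).comp hnt)
    simpa using h5
  have hVcontAt : ∀ x : EuclideanSpace ℝ (Fin N), x ≠ 0 → ContinuousAt V x := by
    intro x hx
    have h0 : 0 < ‖x‖^(2:ℝ) := Real.rpow_pos_of_pos (norm_pos_iff.2 hx) _
    have hcomp1 : ContinuousAt (hb σ m A ∘ (fun y : EuclideanSpace ℝ (Fin N) => ‖y‖^(2:ℝ))) x :=
      ContinuousAt.comp ((hasDerivAt_hb σ m A h0).differentiableAt.continuousAt)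
        hnsqc.continuousAt
    have hcomp2 : ContinuousAt (hb σ m (A+m/2) ∘ (fun y : EuclideanSpace ℝ (Fin N) => ‖y‖^(2:ℝ))) x :=
      ContinuousAt.comp ((hasDerivAt_hb σ m (A+m/2) h0).differentiableAt.continuousAt)
        hnsqc.continuousAt
    rw [hV]
    exact hcomp1.add hcomp2
  -- the comparison argument via the maximum principle
  have hmain : ∀ z : EuclideanSpace ℝ (Fin N), R ≤ ‖z‖ → ε * V z ≤ ψ z := by
    by_contra hcon
    push_neg at hcon
    obtain ⟨z, hzR, hzlt⟩ := hcon
    obtain ⟨w, hw⟩ : ∃ w : EuclideanSpace ℝ (Fin N) → ℝ,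
        w = fun x => ε * V x - ψ x := ⟨_, rfl⟩
    have hwz : 0 < w z := by rw [hw]; simp only []; linarith
    have hwten : Tendsto w (cocompact (EuclideanSpace ℝ (Fin N))) (nhds 0) := by
      rw [hw]
      simpa using (hVdecay.const_mul ε).sub hdecay
    have hwcontAt : ∀ x : EuclideanSpace ℝ (Fin N), x ≠ 0 → ContinuousAt w x := by
      intro x hx
      rw [hw]
      exact ((hVcontAt x hx).const_mul ε).sub hsmooth.continuous.continuousAt
    have hnz : ∀ x : EuclideanSpace ℝ (Fin N), R ≤ ‖x‖ → x ≠ 0 := by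
      intro x hx h0
      rw [h0] at hx; simp at hx; linarith
    have hwcontOn : ContinuousOn w {x : EuclideanSpace ℝ (Fin N) | R ≤ ‖x‖} :=
      fun x hx => (hwcontAt x (hnz x hx)).continuousWithinAt
    obtain ⟨K, hK⟩ : ∃ K : Set (EuclideanSpace ℝ (Fin N)),
        K = {x | R ≤ ‖x‖} ∩ w ⁻¹' (Set.Ici (w z)) := ⟨_, rfl⟩
    have hzK : z ∈ K := by rw [hK]; exact ⟨hzR, Set.mem_preimage.2 Set.self_mem_Ici⟩
    have hKcl : IsClosed K := by
      rw [hK]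
      exact hwcontOn.preimage_isClosed_of_isClosed
        (isClosed_le continuous_const continuous_norm) isClosed_Ici
    have hKcomp : IsCompact K := by
      have hU : Set.Iio (w z) ∈ nhds (0:ℝ) := Iio_mem_nhds hwz
      obtain ⟨Kc, hKc, hKout⟩ := mem_cocompact.1 (hwten hU)
      apply hKc.of_isClosed_subset hKcl
      intro x hx
      by_contra hxK
      have h6 := hKout hxK
      rw [hK] at hx
      have h7 := hx.2
      simp only [Set.mem_preimage, Set.mem_Ici] at h7
      simp only [Set.mem_preimage, Set.mem_Iio] at h6
      linarith
    obtain ⟨x₀, hx₀K, hx₀max⟩ := hKcomp.exists_isMaxOn ⟨z, hzK⟩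
      (hwcontOn.mono (by rw [hK]; exact Set.inter_subset_left))
    have hx₀R : R ≤ ‖x₀‖ := by rw [hK] at hx₀K; exact hx₀K.1
    have hwx₀ : w z ≤ w x₀ := by
      rw [hK] at hx₀K; exact hx₀K.2
    have hglob : ∀ y : EuclideanSpace ℝ (Fin N), R ≤ ‖y‖ → w y ≤ w x₀ := by
      intro y hy
      by_cases hyK : y ∈ K
      · exact hx₀max hyK
      · rw [hK] at hyK
        simp only [Set.mem_inter_iff, Set.mem_setOf_eq, Set.mem_preimage, Set.mem_Ici] at hyK
        push_neg at hyK
        have h8 := hyK hy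
        linarith
    have hx₀Rlt : R < ‖x₀‖ := by
      rcases lt_or_eq_of_le hx₀R with h | h
      · exact h
      · exfalso
        have h9 := hsphere x₀ h.symm
        have hw0 : w x₀ < 0 := by rw [hw]; simp only []; linarith
        linarith
    obtain ⟨t₀, ht₀def⟩ : ∃ t₀:ℝ, t₀ = ‖x₀‖^(2:ℝ) := ⟨_, rfl⟩
    have ht₀T : T₀ ≤ t₀ := by
      rw [hT₀, ht₀def]
      exact Real.rpow_le_rpow hRpos.le hx₀Rlt.le (by norm_num)
    have ht₀pos : 0 < t₀ := by linarith
    have hη : 0 < ‖x₀‖ - R := by linarith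
    -- second derivative test in each coordinate direction
    have hkey : ∀ i : Fin N,
        ε * ((hb2 σ m A t₀ + hb2 σ m (A+m/2) t₀) * (2*(x₀ i))^2
          + (hb1 σ m A t₀ + hb1 σ m (A+m/2) t₀) * 2)
        ≤ fderiv ℝ (fderiv ℝ ψ) x₀ (EuclideanSpace.single i 1)
            (EuclideanSpace.single i 1) := by
      intro i
      obtain ⟨v, hv⟩ : ∃ v : EuclideanSpace ℝ (Fin N),
          v = EuclideanSpace.single i (1:ℝ) := ⟨_, rfl⟩
      have hvn : ‖v‖ = 1 := by rw [hv]; simp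
      obtain ⟨q, hq⟩ : ∃ q : ℝ → ℝ, q = fun s => t₀ + 2*s*(x₀ i) + s^2 := ⟨_, rfl⟩
      have hqnorm : ∀ s:ℝ, q s = ‖x₀ + s • v‖^(2:ℝ) := by
        intro s
        rw [hq, hv, norm_line_sq, ht₀def]
      have hnormlb : ∀ s:ℝ, ‖x₀‖ - |s| ≤ ‖x₀ + s • v‖ := by
        intro s
        have h1 : ‖x₀‖ ≤ ‖x₀ + s • v‖ + ‖s • v‖ := by
          calc ‖x₀‖ = ‖(x₀ + s • v) - s • v‖ := by congr 1; abel
          _ ≤ ‖x₀ + s • v‖ + ‖s • v‖ := norm_sub_le _ _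
        have h2 : ‖s • v‖ = |s| := by rw [norm_smul, hvn, Real.norm_eq_abs, mul_one]
        linarith
      have hRlt : ∀ s:ℝ, s ∈ Set.Ioo (-(‖x₀‖ - R)) (‖x₀‖ - R) → R < ‖x₀ + s • v‖ := by
        intro s hs
        have h1 : |s| < ‖x₀‖ - R := abs_lt.2 ⟨hs.1, hs.2⟩
        have h2 := hnormlb s
        linarith
      have hqpos : ∀ s:ℝ, s ∈ Set.Ioo (-(‖x₀‖ - R)) (‖x₀‖ - R) → 0 < q s := by
        intro s hs
        rw [hqnorm]
        exact Real.rpow_pos_of_pos (by linarith [hRlt s hs]) _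
      have hqd : ∀ s:ℝ, HasDerivAt q (2*(x₀ i) + 2*s) s := by
        intro s
        rw [hq]
        have h1 : HasDerivAt (fun s:ℝ => t₀ + 2*s*(x₀ i)) (2*(x₀ i)) s := by
          simpa using (((hasDerivAt_id s).const_mul (2:ℝ)).mul_const (x₀ i)).const_add t₀
        have h2 : HasDerivAt (fun s:ℝ => s^2) (2*s) s := by
          simpa using hasDerivAt_pow 2 s
        exact h1.add h2
      obtain ⟨g, hg⟩ : ∃ g : ℝ → ℝ, g = fun s =>
          ε * (hb σ m A (q s) + hb σ m (A+m/2) (q s)) - ψ (x₀ + s • v) := ⟨_, rfl⟩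
      obtain ⟨g1, hg1⟩ : ∃ g1 : ℝ → ℝ, g1 = fun s =>
          ε * ((hb1 σ m A (q s) + hb1 σ m (A+m/2) (q s)) * (2*(x₀ i) + 2*s))
            - fderiv ℝ ψ (x₀ + s • v) v := ⟨_, rfl⟩
      obtain ⟨g2, hg2⟩ : ∃ g2 : ℝ → ℝ, g2 = fun s =>
          ε * ((hb2 σ m A (q s) + hb2 σ m (A+m/2) (q s)) * (2*(x₀ i) + 2*s)^2
            + (hb1 σ m A (q s) + hb1 σ m (A+m/2) (q s)) * 2)
            - fderiv ℝ (fderiv ℝ ψ) (x₀ + s • v) v v := ⟨_, rfl⟩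
      have hgd : ∀ s ∈ Set.Ioo (-(‖x₀‖ - R)) (‖x₀‖ - R), HasDerivAt g (g1 s) s := by
        intro s hs
        rw [hg, hg1]
        have hA1 := (hasDerivAt_hb σ m A (hqpos s hs)).comp s (hqd s)
        have hA2 := (hasDerivAt_hb σ m (A+m/2) (hqpos s hs)).comp s (hqd s)
        have h3 := ((hA1.add hA2).const_mul ε).sub (line_hasDerivAt ψ hsmooth x₀ v s)
        refine h3.congr_deriv ?_
        beta_reduce
        ring
      have hg1d : ∀ s ∈ Set.Ioo (-(‖x₀‖ - R)) (‖x₀‖ - R), HasDerivAt g1 (g2 s) s := by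
        intro s hs
        rw [hg1, hg2]
        have hlin : HasDerivAt (fun s:ℝ => 2*(x₀ i) + 2*s) 2 s := by
          simpa using ((hasDerivAt_id s).const_mul (2:ℝ)).const_add (2*(x₀ i))
        have hB1 := ((hasDerivAt_hb1 σ m A (hqpos s hs)).comp s (hqd s)).add
          ((hasDerivAt_hb1 σ m (A+m/2) (hqpos s hs)).comp s (hqd s))
        have h3 := ((hB1.mul hlin).const_mul ε).sub (line_hasDerivAt2 ψ hsmooth x₀ v s)
        refine h3.congr_deriv ?_
        simp only [Pi.add_apply, Function.comp_apply]
        ring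
      have hq0 : q 0 = t₀ := by rw [hq]; ring_nf
      have hg2cont : ContinuousAt g2 0 := by
        rw [hg2]
        have hqc : ContinuousAt q 0 := (hqd 0).differentiableAt.continuousAt
        have ht₀p : (0:ℝ) < q 0 := by rw [hq0]; exact ht₀pos
        have c1 : ContinuousAt (fun s => hb2 σ m A (q s)) 0 :=
          (continuousAt_hb2 σ m A ht₀p).comp hqc
        have c2 : ContinuousAt (fun s => hb2 σ m (A+m/2) (q s)) 0 :=
          (continuousAt_hb2 σ m (A+m/2) ht₀p).comp hqc
        have c3 : ContinuousAt (fun s => hb1 σ m A (q s)) 0 :=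
          ((hasDerivAt_hb1 σ m A ht₀p).differentiableAt.continuousAt).comp hqc
        have c4 : ContinuousAt (fun s => hb1 σ m (A+m/2) (q s)) 0 :=
          ((hasDerivAt_hb1 σ m (A+m/2) ht₀p).differentiableAt.continuousAt).comp hqc
        have c5 : ContinuousAt (fun s:ℝ => 2*(x₀ i) + 2*s) 0 := by fun_prop
        have hF : ContDiff ℝ 1 (fderiv ℝ ψ) := hsmooth.fderiv_right (by norm_num)
        have hFc : Continuous (fderiv ℝ (fderiv ℝ ψ)) := hF.continuous_fderiv one_ne_zero
        have hlinec : Continuous (fun s:ℝ => x₀ + s • v) :=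
          continuous_const.add (continuous_id.smul continuous_const)
        have c6 : Continuous (fun s:ℝ => fderiv ℝ (fderiv ℝ ψ) (x₀ + s • v) v v) :=
          ((hFc.comp hlinec).clm_apply continuous_const).clm_apply continuous_const
        exact ((((c1.add c2).mul (c5.pow 2)).add
          ((c3.add c4).mul continuousAt_const)).const_mul ε).sub c6.continuousAt
      have hlocmax : IsLocalMax g 0 := by
        have hball : Metric.ball (0:ℝ) (‖x₀‖ - R) ∈ nhds (0:ℝ) := Metric.ball_mem_nhds _ hη
        filter_upwards [hball] with s hs
        have hs' : s ∈ Set.Ioo (-(‖x₀‖ - R)) (‖x₀‖ - R) := by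
          rw [Metric.mem_ball, Real.dist_eq, sub_zero] at hs
          exact ⟨neg_lt_of_abs_lt hs, lt_of_abs_lt hs⟩
        have hgw : ∀ s:ℝ, g s = w (x₀ + s • v) := by
          intro s
          rw [hg, hw, hV]
          simp only []
          rw [hqnorm]
        rw [hgw s, hgw 0]
        have h0 : x₀ + (0:ℝ) • v = x₀ := by simp
        rw [h0]
        exact hglob _ (le_of_lt (hRlt s hs'))
      have htest := secondDerivTest hη hgd hg1d hg2cont hlocmax
      rw [hg2] at htest
      simp only [hq0] at htest
      have h2v : fderiv ℝ (fderiv ℝ ψ) (x₀ + (0:ℝ) • v) v v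
          = fderiv ℝ (fderiv ℝ ψ) x₀ (EuclideanSpace.single i 1)
              (EuclideanSpace.single i 1) := by
        rw [hv]; simp
      rw [h2v] at htest
      have harg : (2*(x₀ i) + 2*(0:ℝ))^2 = (2*(x₀ i))^2 := by ring
      rw [harg] at htest
      linarith
    -- sum over coordinates
    have hsq2 : ∑ i, (x₀ i)^2 = t₀ := by rw [ht₀def, norm_rpow_two_eq_sum]
    have hsum : ε * ((4*t₀) * (hb2 σ m A t₀ + hb2 σ m (A+m/2) t₀)
        + 2*(N:ℝ) * (hb1 σ m A t₀ + hb1 σ m (A+m/2) t₀)) ≤ laplacian ψ x₀ := by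
      rw [laplacian_eq_sum_d2]
      have hexp : ∑ i : Fin N, ε * ((hb2 σ m A t₀ + hb2 σ m (A+m/2) t₀) * (2*(x₀ i))^2
          + (hb1 σ m A t₀ + hb1 σ m (A+m/2) t₀) * 2)
          = ε * ((4*t₀) * (hb2 σ m A t₀ + hb2 σ m (A+m/2) t₀)
            + 2*(N:ℝ) * (hb1 σ m A t₀ + hb1 σ m (A+m/2) t₀)) := by
        have hterm : ∀ i : Fin N, ε * ((hb2 σ m A t₀ + hb2 σ m (A+m/2) t₀) * (2*(x₀ i))^2
            + (hb1 σ m A t₀ + hb1 σ m (A+m/2) t₀) * 2)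
            = (4*ε*(hb2 σ m A t₀ + hb2 σ m (A+m/2) t₀)) * (x₀ i)^2
              + 2*ε*(hb1 σ m A t₀ + hb1 σ m (A+m/2) t₀) := fun i => by ring
        rw [Finset.sum_congr rfl (fun i _ => hterm i), Finset.sum_add_distrib,
          ← Finset.mul_sum, hsq2, Finset.sum_const, Finset.card_univ, Fintype.card_fin,
          nsmul_eq_mul]
        ring
      rw [← hexp]
      exact Finset.sum_le_sum (fun i _ => hkey i)
    -- eigenvalue equation and the key inequality give a contradiction
    have hconv : ∀ γ:ℝ, t₀^(γ/2) = ‖x₀‖^γ := by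
      intro γ
      rw [ht₀def, ← Real.rpow_mul (norm_nonneg x₀)]
      congr 1
      ring
    have hkey2 := key_ineq (N:ℝ) α β lam0 σ m A hm hσm hAeq hβm hlam0 hT1 ht₀T hc hc' hcT hc'T
    have hreq : ((4*t₀*hb2 σ m A t₀ + 2*(N:ℝ)*hb1 σ m A t₀)
        + (4*t₀*hb2 σ m (A+m/2) t₀ + 2*(N:ℝ)*hb1 σ m (A+m/2) t₀))
        = (4*t₀) * (hb2 σ m A t₀ + hb2 σ m (A+m/2) t₀)
          + 2*(N:ℝ) * (hb1 σ m A t₀ + hb1 σ m (A+m/2) t₀) := by ring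
    rw [hreq, hconv β, hconv α] at hkey2
    have heq : (1 + ‖x₀‖^α) * laplacian ψ x₀ = (lam0 + ‖x₀‖^β) * ψ x₀ := by
      have h10 := heigen x₀
      linarith
    have hlampos : 0 < lam0 + ‖x₀‖^β := by
      have h11 : T₀^(β/2) ≤ t₀^(β/2) :=
        Real.rpow_le_rpow hT₀pos.le ht₀T (by linarith)
      rw [hconv β] at h11
      linarith
    have h1α : (0:ℝ) < 1 + ‖x₀‖^α := by positivity
    have hVx₀ : V x₀ = hb σ m A t₀ + hb σ m (A+m/2) t₀ := by
      simp only [hV]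
      rw [← ht₀def]
    have hψx₀ : ψ x₀ < ε * (hb σ m A t₀ + hb σ m (A+m/2) t₀) := by
      have h12 : 0 < w x₀ := lt_of_lt_of_le hwz hwx₀
      rw [hw] at h12
      simp only [] at h12
      rw [hVx₀] at h12
      linarith
    have c1 : (1 + ‖x₀‖^α) * (ε * ((4*t₀) * (hb2 σ m A t₀ + hb2 σ m (A+m/2) t₀)
        + 2*(N:ℝ) * (hb1 σ m A t₀ + hb1 σ m (A+m/2) t₀)))
        ≤ (1 + ‖x₀‖^α) * laplacian ψ x₀ :=
      mul_le_mul_of_nonneg_left hsum h1α.le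
    have c2 : ε * ((lam0 + ‖x₀‖^β) * (hb σ m A t₀ + hb σ m (A+m/2) t₀))
        ≤ ε * ((1 + ‖x₀‖^α) * ((4*t₀) * (hb2 σ m A t₀ + hb2 σ m (A+m/2) t₀)
          + 2*(N:ℝ) * (hb1 σ m A t₀ + hb1 σ m (A+m/2) t₀))) :=
      mul_le_mul_of_nonneg_left hkey2 hεpos.le
    have m1 : ε * ((1 + ‖x₀‖^α) * ((4*t₀) * (hb2 σ m A t₀ + hb2 σ m (A+m/2) t₀)
        + 2*(N:ℝ) * (hb1 σ m A t₀ + hb1 σ m (A+m/2) t₀)))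
        = (1 + ‖x₀‖^α) * (ε * ((4*t₀) * (hb2 σ m A t₀ + hb2 σ m (A+m/2) t₀)
          + 2*(N:ℝ) * (hb1 σ m A t₀ + hb1 σ m (A+m/2) t₀))) := by ring
    have m2 : (lam0 + ‖x₀‖^β) * (ε * (hb σ m A t₀ + hb σ m (A+m/2) t₀))
        = ε * ((lam0 + ‖x₀‖^β) * (hb σ m A t₀ + hb σ m (A+m/2) t₀)) := by ring
    have m3 : (lam0 + ‖x₀‖^β) * ψ x₀
        < (lam0 + ‖x₀‖^β) * (ε * (hb σ m A t₀ + hb σ m (A+m/2) t₀)) :=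
      mul_lt_mul_of_pos_left hψx₀ hlampos
    linarith
  -- conclusion: assemble the constant
  obtain ⟨ρ, hρ⟩ : ∃ ρ : ℝ → ℝ, ρ = fun r => ψ (r • e₀) := ⟨_, rfl⟩
  have hρc : Continuous ρ := by
    rw [hρ]
    exact hsmooth.continuous.comp (continuous_id.smul continuous_const)
  obtain ⟨r₁, hr₁mem, hr₁min⟩ := (isCompact_Icc (a := (1:ℝ)) (b := R)).exists_isMinOn
    ⟨1, by constructor <;> linarith⟩ hρc.continuousOn
  obtain ⟨μ, hμ⟩ : ∃ μ:ℝ, μ = ρ r₁ := ⟨_, rfl⟩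
  have hμpos : 0 < μ := by rw [hμ, hρ]; exact hpos _
  obtain ⟨C₁, hC₁⟩ : ∃ C₁:ℝ, C₁ = min ε μ := ⟨_, rfl⟩
  have hC₁pos : 0 < C₁ := by rw [hC₁]; exact lt_min hεpos hμpos
  refine ⟨C₁, hC₁pos, ?_⟩
  intro x hx
  have hxnorm : (0:ℝ) < ‖x‖ := by linarith
  obtain ⟨Φ, hΦ⟩ : ∃ Φ:ℝ, Φ = ‖x‖ ^ (-(((N : ℝ) - 1) / 2) - (β - α) / 4) *
      Real.exp (-(2 / (β - α + 2)) * ‖x‖ ^ ((β - α + 2) / 2)) := ⟨_, rfl⟩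
  have hΦpos : 0 < Φ := by
    rw [hΦ]
    exact mul_pos (Real.rpow_pos_of_pos hxnorm _) (Real.exp_pos _)
  have hΦle1 : Φ ≤ 1 := by
    rw [hΦ]
    have h1 : ‖x‖ ^ (-(((N : ℝ) - 1) / 2) - (β - α) / 4) ≤ 1 := by
      apply Real.rpow_le_one_of_one_le_of_nonpos hx
      rw [hA'] at hApos
      linarith
    have h2 : Real.exp (-(2 / (β - α + 2)) * ‖x‖ ^ ((β - α + 2) / 2)) ≤ 1 := by
      apply Real.exp_le_one_iff.2
      have h3 : 0 ≤ (2 / (β - α + 2)) * ‖x‖ ^ ((β - α + 2) / 2) := by positivity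
      linarith
    calc ‖x‖ ^ (-(((N : ℝ) - 1) / 2) - (β - α) / 4) *
        Real.exp (-(2 / (β - α + 2)) * ‖x‖ ^ ((β - α + 2) / 2))
        ≤ 1 * 1 := by
          apply mul_le_mul h1 h2 (Real.exp_pos _).le (by norm_num)
      _ = 1 := by norm_num
  have hΦleV : Φ ≤ V x := by
    have ht : (0:ℝ) < ‖x‖^(2:ℝ) := Real.rpow_pos_of_pos hxnorm _
    have hfirst : hb σ m A (‖x‖^(2:ℝ)) = Φ := by
      unfold hb term
      rw [one_mul, hΦ]
      have e1 : (‖x‖^(2:ℝ))^(-A) = ‖x‖ ^ (-(((N : ℝ) - 1) / 2) - (β - α) / 4) := by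
        rw [← Real.rpow_mul (norm_nonneg x)]
        congr 1
        rw [hA']
        ring
      have e2 : (‖x‖^(2:ℝ))^m = ‖x‖ ^ ((β - α + 2) / 2) := by
        rw [← Real.rpow_mul (norm_nonneg x)]
        congr 1
        rw [hm']
        ring
      rw [e1, e2, hσ]
    have hsecond := hb_pos σ m (A+m/2) ht
    simp only [hV]
    linarith
  by_cases hxR : R ≤ ‖x‖
  · have h1 := hmain x hxR
    have h2 : C₁ * Φ ≤ ε * Φ := by
      apply mul_le_mul_of_nonneg_right _ hΦpos.le
      rw [hC₁]; exact min_le_left _ _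
    have h3 : ε * Φ ≤ ε * V x := mul_le_mul_of_nonneg_left hΦleV hεpos.le
    calc C₁ * ‖x‖ ^ (-(((N : ℝ) - 1) / 2) - (β - α) / 4) *
        Real.exp (-(2 / (β - α + 2)) * ‖x‖ ^ ((β - α + 2) / 2))
        = C₁ * Φ := by rw [hΦ]; ring
      _ ≤ ε * Φ := h2
      _ ≤ ε * V x := h3
      _ ≤ ψ x := h1
  · push_neg at hxR
    have hmem : ‖x‖ ∈ Set.Icc (1:ℝ) R := ⟨hx, hxR.le⟩
    have hψx : ψ x = ρ ‖x‖ := by rw [hρ]; exact hsphereval x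
    have hμle : μ ≤ ψ x := by
      rw [hψx, hμ]
      exact hr₁min hmem
    have h2 : C₁ * Φ ≤ μ * 1 := by
      apply mul_le_mul _ hΦle1 hΦpos.le hμpos.le
      rw [hC₁]; exact min_le_right _ _
    calc C₁ * ‖x‖ ^ (-(((N : ℝ) - 1) / 2) - (β - α) / 4) *
        Real.exp (-(2 / (β - α + 2)) * ‖x‖ ^ ((β - α + 2) / 2))
        = C₁ * Φ := by rw [hΦ]; ring
      _ ≤ μ * 1 := h2
      _ = μ := by ring
      _ ≤ ψ x := hμle
end

section
/- On-diagonal heat kernel lower bound (Proposition 3.2): Let N > 2, α ≥ 2, β > α − 2, λ₀ < 0, and let μ be the measure on ℝ^N with dμ(x) = (1+|x|^α)^{−1} dx. Let ψ : ℝ^N → (0,∞) be continuous, bounded, square integrable with respect to μ, and suppose there exists C₁ > 0 with ψ(x) ≥ C₁ |x|^{−(N−1)/2 − (β−α)/4} exp(−(2/(β−α+2)) |x|^{(β−α+2)/2}) for |x| ≥ 1. Let k : (0,∞) × ℝ^N × ℝ^N → [0,∞) be measurable and define k_μ(t,x,y) := (1+|y|^α) k(t,x,y); assume k_μ is symmetric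 in (x,y), satisfies the Chapman–Kolmogorov identity k_μ(t+s,x,y) = ∫ k_μ(t,x,z) k_μ(s,z,y) dμ(z), k_μ(t,x,·) ∈ L²(μ) for all t > 0 and x, and ∫_{ℝ^N} k(t,x,y) ψ(y) dy = e^{λ₀ t} ψ(x) for all t > 0 and x. Then there exists M > 0 such that for all t > 0 and all x with |x| ≥ 1: k(t,x,x) ≥ M e^{λ₀ t} ( |x|^{(α−β)/4 − (N−1)/2} exp(−(2/(β−α+2)) |x|^{(β−α+2)/2}) )² (1+|x|^α)^{−1}. -/
open MeasureTheory Filter Real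
open scoped ENNReal NNReal

/-- The measure `dμ(x) = (1+|x|^α)^{-1} dx` on `ℝ^N`. -/
noncomputable def muMeas (N : ℕ) (α : ℝ) : Measure (EuclideanSpace ℝ (Fin N)) :=
  volume.withDensity fun x : EuclideanSpace ℝ (Fin N) => ENNReal.ofReal (1 + ‖x‖ ^ α)⁻¹

lemma integral_muMeas (N : ℕ) (α : ℝ) (f : EuclideanSpace ℝ (Fin N) → ℝ) :
    ∫ y, f y ∂(muMeas N α) = ∫ y, (1 + ‖y‖ ^ α)⁻¹ * f y := by
  have hm : Measurable fun x : EuclideanSpace ℝ (Fin N) => ((1 + ‖x‖ ^ α)⁻¹).toNNReal := by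
    have : Measurable fun x : EuclideanSpace ℝ (Fin N) => (1 + ‖x‖ ^ α)⁻¹ :=
      ((measurable_const.add (measurable_norm.pow_const α)).inv)
    exact this.real_toNNReal
  have h1 : muMeas N α = volume.withDensity
      fun x : EuclideanSpace ℝ (Fin N) => (((1 + ‖x‖ ^ α)⁻¹).toNNReal : ℝ≥0∞) := rfl
  rw [h1, integral_withDensity_eq_integral_smul hm f]
  refine integral_congr_ae (Filter.Eventually.of_forall fun y => ?_)
  have hpos : (0:ℝ) ≤ (1 + ‖y‖ ^ α)⁻¹ := by positivity
  simp [NNReal.smul_def, Real.coe_toNNReal _ hpos]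

/-- On-diagonal heat kernel lower bound (Proposition 3.2):
`k(t,x,x) ≥ M e^{λ₀ t} (|x|^{(α-β)/4-(N-1)/2} e^{-(2/(β-α+2))|x|^{(β-α+2)/2}})² (1+|x|^α)^{-1}`
for `t > 0` and `|x| ≥ 1`. -/
theorem on_diagonal_heat_kernel_lower_bound
    (N : ℕ) (hN : 2 < N) (α β lam0 : ℝ) (hα : 2 ≤ α) (hβ : α - 2 < β) (hlam0 : lam0 < 0)
    (ψ : EuclideanSpace ℝ (Fin N) → ℝ) (hψcont : Continuous ψ) (hψpos : ∀ x, 0 < ψ x)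
    (hψbdd : ∃ M : ℝ, ∀ x, ψ x ≤ M)
    (hψL2 : MemLp ψ 2 (muMeas N α))
    (C₁ : ℝ) (hC₁ : 0 < C₁)
    (hψlow : ∀ x : EuclideanSpace ℝ (Fin N), 1 ≤ ‖x‖ →
      C₁ * ‖x‖ ^ (-(((N : ℝ) - 1) / 2) - (β - α) / 4) *
        Real.exp (-(2 / (β - α + 2)) * ‖x‖ ^ ((β - α + 2) / 2)) ≤ ψ x)
    (k : ℝ → EuclideanSpace ℝ (Fin N) → EuclideanSpace ℝ (Fin N) → ℝ)
    (hmeas : Measurable fun p : ℝ × EuclideanSpace ℝ (Fin N) × EuclideanSpace ℝ (Fin N) =>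
      k p.1 p.2.1 p.2.2)
    (hnonneg : ∀ t > (0 : ℝ), ∀ x y, 0 ≤ k t x y)
    (hsymm : ∀ t > (0 : ℝ), ∀ x y,
      (1 + ‖y‖ ^ α) * k t x y = (1 + ‖x‖ ^ α) * k t y x)
    (hCK : ∀ t > (0 : ℝ), ∀ s > (0 : ℝ), ∀ x y,
      (1 + ‖y‖ ^ α) * k (t + s) x y =
        ∫ z, ((1 + ‖z‖ ^ α) * k t x z) * ((1 + ‖y‖ ^ α) * k s z y) ∂(muMeas N α))
    (hL2 : ∀ t > (0 : ℝ), ∀ x,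
      MemLp (fun y => (1 + ‖y‖ ^ α) * k t x y) 2 (muMeas N α))
    (heig : ∀ t > (0 : ℝ), ∀ x, ∫ y, k t x y * ψ y = Real.exp (lam0 * t) * ψ x) :
    ∃ M > 0, ∀ t > (0 : ℝ), ∀ x : EuclideanSpace ℝ (Fin N), 1 ≤ ‖x‖ →
      M * Real.exp (lam0 * t) *
          (‖x‖ ^ ((α - β) / 4 - ((N : ℝ) - 1) / 2) *
            Real.exp (-(2 / (β - α + 2)) * ‖x‖ ^ ((β - α + 2) / 2))) ^ 2 *
          (1 + ‖x‖ ^ α)⁻¹ ≤ k t x x := by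
  classical
  have hPpos : ∀ y : EuclideanSpace ℝ (Fin N), (0:ℝ) < 1 + ‖y‖ ^ α := by
    intro y; positivity
  set S := ∫ y, ψ y ^ 2 ∂(muMeas N α) with hSdef
  have hSnn : 0 ≤ S := integral_nonneg fun y => sq_nonneg _
  have hQpos : (0:ℝ) < S + 1 := by linarith
  refine ⟨C₁ ^ 2 / (S + 1), by positivity, ?_⟩
  have key : ∀ s > (0:ℝ), ∀ x, Real.exp (lam0 * s) ^ 2 * ψ x ^ 2 ≤
      (1 + ‖x‖ ^ α) * k (s + s) x x * (S + 1) := by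
    intro s hs x
    set g : EuclideanSpace ℝ (Fin N) → ℝ := fun y => (1 + ‖y‖ ^ α) * k s x y with hg
    have hgnn : ∀ y, 0 ≤ g y := fun y => mul_nonneg (hPpos y).le (hnonneg s hs x y)
    have h1 : ∫ y, g y * ψ y ∂(muMeas N α) = Real.exp (lam0 * s) * ψ x := by
      rw [integral_muMeas, ← heig s hs x]
      refine integral_congr_ae (Filter.Eventually.of_forall fun y => ?_)
      have hne : (1 + ‖y‖ ^ α) ≠ 0 := (hPpos y).ne'
      simp only [hg]
      field_simp
    have h2 : ∫ y, g y ^ 2 ∂(muMeas N α) = (1 + ‖x‖ ^ α) * k (s + s) x x := by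
      rw [hCK s hs s hs x x]
      refine integral_congr_ae (Filter.Eventually.of_forall fun z => ?_)
      show g z ^ 2 = (1 + ‖z‖ ^ α) * k s x z * ((1 + ‖x‖ ^ α) * k s z x)
      rw [hsymm s hs z x, pow_two]
    have hconj : Real.HolderConjugate 2 2 := Real.HolderConjugate.two_two
    have hgL2 : MemLp g (ENNReal.ofReal 2) (muMeas N α) := by
      simpa using hL2 s hs x
    have hψL2' : MemLp ψ (ENNReal.ofReal 2) (muMeas N α) := by simpa using hψL2
    have h3 := integral_mul_le_Lp_mul_Lq_of_nonneg hconj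
      (Filter.Eventually.of_forall hgnn)
      (Filter.Eventually.of_forall fun y => (hψpos y).le) hgL2 hψL2'
    have hsq : ∀ r : ℝ, r ^ (2:ℝ) = r ^ (2:ℕ) := fun r => by
      rw [← Real.rpow_natCast r 2]; norm_num
    simp_rw [hsq] at h3
    rw [h1, h2, ← hSdef] at h3
    set K := (1 + ‖x‖ ^ α) * k (s + s) x x with hK
    have hKnn : 0 ≤ K := by
      rw [← h2]; exact integral_nonneg fun y => sq_nonneg _
    rw [← Real.sqrt_eq_rpow, ← Real.sqrt_eq_rpow] at h3
    have hL : 0 ≤ Real.exp (lam0 * s) * ψ x :=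
      mul_nonneg (Real.exp_pos _).le (hψpos x).le
    have h4 : (Real.exp (lam0 * s) * ψ x) ^ 2 ≤ K * S := by
      calc (Real.exp (lam0 * s) * ψ x) ^ 2
          ≤ (Real.sqrt K * Real.sqrt S) ^ 2 := pow_le_pow_left₀ hL h3 2
        _ = K * S := by
            rw [mul_pow, Real.sq_sqrt hKnn, Real.sq_sqrt hSnn]
    calc Real.exp (lam0 * s) ^ 2 * ψ x ^ 2 = (Real.exp (lam0 * s) * ψ x) ^ 2 := by ring
      _ ≤ K * S := h4
      _ ≤ K * (S + 1) := mul_le_mul_of_nonneg_left (by linarith) hKnn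
  intro t ht x hx
  have hs : 0 < t / 2 := by linarith
  have hkey := key (t / 2) hs x
  rw [show t / 2 + t / 2 = t by ring] at hkey
  have hexp2 : Real.exp (lam0 * (t / 2)) ^ 2 = Real.exp (lam0 * t) := by
    rw [pow_two, ← Real.exp_add]; congr 1; ring
  rw [hexp2] at hkey
  have hexpeq : (α - β) / 4 - ((N : ℝ) - 1) / 2 = -(((N : ℝ) - 1) / 2) - (β - α) / 4 := by
    ring
  rw [hexpeq]
  set E := ‖x‖ ^ (-(((N : ℝ) - 1) / 2) - (β - α) / 4) *
    Real.exp (-(2 / (β - α + 2)) * ‖x‖ ^ ((β - α + 2) / 2)) with hEdef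
  have hEnn : 0 ≤ E := by positivity
  have hψsq : (C₁ * E) ^ 2 ≤ ψ x ^ 2 := by
    refine pow_le_pow_left₀ (by positivity) ?_ 2
    calc C₁ * E = C₁ * ‖x‖ ^ (-(((N : ℝ) - 1) / 2) - (β - α) / 4) *
        Real.exp (-(2 / (β - α + 2)) * ‖x‖ ^ ((β - α + 2) / 2)) := by
          rw [hEdef]; ring
      _ ≤ ψ x := hψlow x hx
  have H : Real.exp (lam0 * t) * (C₁ * E) ^ 2 ≤ (1 + ‖x‖ ^ α) * k t x x * (S + 1) :=
    calc Real.exp (lam0 * t) * (C₁ * E) ^ 2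
        ≤ Real.exp (lam0 * t) * ψ x ^ 2 :=
          mul_le_mul_of_nonneg_left hψsq (Real.exp_pos _).le
      _ ≤ _ := hkey
  have hP := hPpos x
  have heq : C₁ ^ 2 / (S + 1) * Real.exp (lam0 * t) * E ^ 2 * (1 + ‖x‖ ^ α)⁻¹ =
      Real.exp (lam0 * t) * (C₁ * E) ^ 2 / ((S + 1) * (1 + ‖x‖ ^ α)) := by
    field_simp
  rw [heq, div_le_iff₀ (by positivity)]
  calc Real.exp (lam0 * t) * (C₁ * E) ^ 2 ≤ (1 + ‖x‖ ^ α) * k t x x * (S + 1) := H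
    _ = k t x x * ((S + 1) * (1 + ‖x‖ ^ α)) := by ring
end

section
/- Heat kernel upper bound (Theorem 3.3, given short-time intrinsic ultracontractivity): Let N > 2, α ≥ 2, β > α − 2, λ₀ < 0, set b := (β−α+2)/(β+α−2), and let μ be the measure on ℝ^N with dμ(x) = (1+|x|^α)^{−1} dx. Let ψ : ℝ^N → (0,∞) satisfy ψ(x) ≤ C₂ |x|^{−(N−1)/2 − (β−α)/4} exp(−(2/(β−α+2)) |x|^{(β−α+2)/2}) for |x| ≥ 1, for some C₂ > 0. Let k : (0,∞) × ℝ^N × ℝ^N → [0,∞) be measurable and define k_μ(t,x,y) := (1+|y|^α) k(t,x,y); assume: (i) k_μ is symmetric in (x,y); (ii) k_μ satisfies the Chapman–Kolmogorov identity k_μ(t+s,x,y) = ∫ k_μ(t,x,z) k_μ(s,z,y) dμ(z); (iii) k_μ(t,x,·) ∈ L²(μ) for all t > 0 and x; (iv) for every f ∈ L²(μ) and s > 0, ‖∫ k_μ(s,·,y) f(y) dμ(y)‖_{L²(μ)} ≤ e^{λ₀ s}‖f‖_{L²(μ)}; (v) there are constants a₁, a₂ > 0 with k_μ(t,x,y)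 ≤ a₁ e^{a₂ t^{−b}} ψ(x) ψ(y) for all 0 < t ≤ 1 and x, y ∈ ℝ^N. Then there exist constants c₁, c₂ > 0 such that for all t > 0 and all x, y ∈ ℝ^N with |x| ≥ 1 and |y| ≥ 1: k(t,x,y) ≤ c₁ e^{λ₀ t + c₂ t^{−b}} |x|^{−(N−1)/2 − (β−α)/4} exp(−(2/(β−α+2)) |x|^{(β−α+2)/2}) · (1+|y|^α)^{−1} |y|^{−(N−1)/2 − (β−α)/4} exp(−(2/(β−α+2)) |y|^{(β−α+2)/2}). -/
open MeasureTheory Filter Real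

/-- Heat kernel upper bound (Theorem 3.3), given the short-time intrinsic
ultracontractivity `k_μ(t,x,y) ≤ a₁ e^{a₂ t^{-b}} ψ(x) ψ(y)` for `0 < t ≤ 1`:
for all `t > 0` and `|x|, |y| ≥ 1`,
`k(t,x,y) ≤ c₁ e^{λ₀ t + c₂ t^{-b}} Φ(x) (1+|y|^α)^{-1} Φ(y)`. -/
theorem heat_kernel_upper_bound
    (N : ℕ) (hN : 2 < N) (α β lam0 C₂ : ℝ) (hα : 2 ≤ α) (hβ : α - 2 < β)
    (hlam0 : lam0 < 0) (hC₂ : 0 < C₂)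
    (ψ : EuclideanSpace ℝ (Fin N) → ℝ) (hψpos : ∀ x, 0 < ψ x)
    (hψup : ∀ x : EuclideanSpace ℝ (Fin N), 1 ≤ ‖x‖ →
      ψ x ≤ C₂ * ‖x‖ ^ (-(((N : ℝ) - 1) / 2) - (β - α) / 4) *
        Real.exp (-(2 / (β - α + 2)) * ‖x‖ ^ ((β - α + 2) / 2)))
    (k : ℝ → EuclideanSpace ℝ (Fin N) → EuclideanSpace ℝ (Fin N) → ℝ)
    (hmeas : Measurable fun p : ℝ × EuclideanSpace ℝ (Fin N) × EuclideanSpace ℝ (Fin N) =>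
      k p.1 p.2.1 p.2.2)
    (hnonneg : ∀ t > (0 : ℝ), ∀ x y, 0 ≤ k t x y)
    (hsymm : ∀ t > (0 : ℝ), ∀ x y,
      (1 + ‖y‖ ^ α) * k t x y = (1 + ‖x‖ ^ α) * k t y x)
    (hCK : ∀ t > (0 : ℝ), ∀ s > (0 : ℝ), ∀ x y,
      (1 + ‖y‖ ^ α) * k (t + s) x y =
        ∫ z, ((1 + ‖z‖ ^ α) * k t x z) * ((1 + ‖y‖ ^ α) * k s z y) ∂(muMeas N α))
    (hL2 : ∀ t > (0 : ℝ), ∀ x,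
      MemLp (fun y => (1 + ‖y‖ ^ α) * k t x y) 2 (muMeas N α))
    (hopnorm : ∀ f : EuclideanSpace ℝ (Fin N) → ℝ, MemLp f 2 (muMeas N α) →
      ∀ s > (0 : ℝ),
      ∫ x, (∫ y, ((1 + ‖y‖ ^ α) * k s x y) * f y ∂(muMeas N α)) ^ 2 ∂(muMeas N α) ≤
        Real.exp (lam0 * s) ^ 2 * ∫ x, f x ^ 2 ∂(muMeas N α))
    (a₁ a₂ : ℝ) (ha₁ : 0 < a₁) (ha₂ : 0 < a₂)
    (hIU : ∀ t : ℝ, 0 < t → t ≤ 1 → ∀ x y,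
      (1 + ‖y‖ ^ α) * k t x y ≤
        a₁ * Real.exp (a₂ * t ^ (-((β - α + 2) / (β + α - 2)))) * ψ x * ψ y) :
    ∃ c₁ > 0, ∃ c₂ > 0, ∀ t > (0 : ℝ), ∀ x y : EuclideanSpace ℝ (Fin N),
      1 ≤ ‖x‖ → 1 ≤ ‖y‖ →
      k t x y ≤
        c₁ * Real.exp (lam0 * t + c₂ * t ^ (-((β - α + 2) / (β + α - 2)))) *
          (‖x‖ ^ (-(((N : ℝ) - 1) / 2) - (β - α) / 4) *
            Real.exp (-(2 / (β - α + 2)) * ‖x‖ ^ ((β - α + 2) / 2))) *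
          ((1 + ‖y‖ ^ α)⁻¹ * ‖y‖ ^ (-(((N : ℝ) - 1) / 2) - (β - α) / 4) *
            Real.exp (-(2 / (β - α + 2)) * ‖y‖ ^ ((β - α + 2) / 2))) := by
  classical
  set b' : ℝ := -((β - α + 2) / (β + α - 2)) with hb'
  set μ' := muMeas N α with hμ'
  have hpos : ∀ y : EuclideanSpace ℝ (Fin N), (0:ℝ) < 1 + ‖y‖ ^ α := fun y => by positivity
  have hhalf : (0:ℝ) < 1/2 := by norm_num
  -- uniform square bound at time 1
  have hsq1 : ∀ x : EuclideanSpace ℝ (Fin N),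
      ∫ z, ((1 + ‖z‖ ^ α) * k (1/2) x z) ^ 2 ∂μ' = (1 + ‖x‖ ^ α) * k 1 x x := by
    intro x
    have hck := hCK (1/2) hhalf (1/2) hhalf x x
    rw [show (1/2 + 1/2 : ℝ) = 1 by norm_num] at hck
    rw [hck]
    refine integral_congr_ae (Filter.Eventually.of_forall fun z => ?_)
    dsimp only
    rw [hsymm (1/2) hhalf z x]
    ring
  have hb1 : ∀ x : EuclideanSpace ℝ (Fin N),
      (1 + ‖x‖ ^ α) * k 1 x x ≤ a₁ * Real.exp a₂ * (ψ x * ψ x) := by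
    intro x
    have := hIU 1 one_pos le_rfl x x
    rw [Real.one_rpow, mul_one] at this
    linarith [this]
  -- key uniform bound for k_μ
  have key : ∀ t > (0:ℝ), ∀ x y : EuclideanSpace ℝ (Fin N),
      (1 + ‖y‖ ^ α) * k t x y ≤
        a₁ * Real.exp (a₂ - lam0) * Real.exp (lam0 * t + a₂ * t ^ b') * (ψ x * ψ y) := by
    intro t ht x y
    rcases le_or_gt t 1 with htle | htgt
    · -- short time
      have h0 := hIU t ht htle x y
      have hcoef : a₁ * Real.exp (a₂ * t ^ b') ≤
          a₁ * Real.exp (a₂ - lam0) * Real.exp (lam0 * t + a₂ * t ^ b') := by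
        rw [mul_assoc, ← Real.exp_add]
        refine mul_le_mul_of_nonneg_left (Real.exp_le_exp.mpr ?_) ha₁.le
        nlinarith [mul_nonneg (neg_nonneg.mpr hlam0.le) (sub_nonneg.mpr htle)]
      calc (1 + ‖y‖ ^ α) * k t x y ≤ a₁ * Real.exp (a₂ * t ^ b') * ψ x * ψ y := h0
        _ = a₁ * Real.exp (a₂ * t ^ b') * (ψ x * ψ y) := by ring
        _ ≤ a₁ * Real.exp (a₂ - lam0) * Real.exp (lam0 * t + a₂ * t ^ b') * (ψ x * ψ y) :=
            mul_le_mul_of_nonneg_right hcoef (mul_nonneg (hψpos x).le (hψpos y).le)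
    · -- long time
      have hs : (0:ℝ) < t - 1 := by linarith
      have hs2 : (0:ℝ) < (t - 1) + 1/2 := by linarith
      have hh2 : MemLp (fun z => (1 + ‖z‖ ^ α) * k (1/2) x z) (ENNReal.ofReal 2) μ' := by
        simpa [ENNReal.ofReal_ofNat] using hL2 (1/2) hhalf x
      have hg2 : MemLp (fun z => (1 + ‖z‖ ^ α) * k ((t-1) + 1/2) y z) (ENNReal.ofReal 2) μ' := by
        simpa [ENNReal.ofReal_ofNat] using hL2 ((t-1) + 1/2) hs2 y
      -- representation of k_μ(t,x,y)
      have hrep : (1 + ‖y‖ ^ α) * k t x y =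
          ∫ z, ((1 + ‖z‖ ^ α) * k (1/2) x z) * ((1 + ‖z‖ ^ α) * k ((t-1) + 1/2) y z) ∂μ' := by
        have hck := hCK (1/2) hhalf ((t-1) + 1/2) hs2 x y
        rw [show (1/2 + ((t-1) + 1/2) : ℝ) = t by ring] at hck
        rw [hck]
        refine integral_congr_ae (Filter.Eventually.of_forall fun z => ?_)
        dsimp only
        rw [hsymm ((t-1) + 1/2) hs2 z y]
      -- Cauchy-Schwarz
      have hCS := integral_mul_le_Lp_mul_Lq_of_nonneg (μ := μ')
        Real.HolderConjugate.two_two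
        (Filter.Eventually.of_forall fun z =>
          mul_nonneg (hpos z).le (hnonneg (1/2) hhalf x z))
        (Filter.Eventually.of_forall fun z =>
          mul_nonneg (hpos z).le (hnonneg ((t-1) + 1/2) hs2 y z))
        hh2 hg2
      simp only [Real.rpow_two, ← Real.sqrt_eq_rpow] at hCS
      -- bound the first factor
      have hx2 : ∫ z, ((1 + ‖z‖ ^ α) * k (1/2) x z) ^ 2 ∂μ' ≤ a₁ * Real.exp a₂ * (ψ x * ψ x) :=
        (hsq1 x).le.trans (hb1 x)
      -- bound the second factor via the semigroup contraction
      have hgrep : ∀ z, (1 + ‖z‖ ^ α) * k ((t-1) + 1/2) y z =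
          ∫ w, ((1 + ‖w‖ ^ α) * k (t-1) z w) * ((1 + ‖w‖ ^ α) * k (1/2) y w) ∂μ' := by
        intro z
        rw [hsymm ((t-1) + 1/2) hs2 y z, hCK (t-1) hs (1/2) hhalf z y]
        refine integral_congr_ae (Filter.Eventually.of_forall fun w => ?_)
        dsimp only
        rw [hsymm (1/2) hhalf w y]
      have hf2 : MemLp (fun w => (1 + ‖w‖ ^ α) * k (1/2) y w) 2 μ' := hL2 (1/2) hhalf y
      have hy2 : ∫ z, ((1 + ‖z‖ ^ α) * k ((t-1) + 1/2) y z) ^ 2 ∂μ' ≤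
          Real.exp (lam0 * (t-1)) ^ 2 * (a₁ * Real.exp a₂ * (ψ y * ψ y)) := by
        have hge : ∫ z, ((1 + ‖z‖ ^ α) * k ((t-1) + 1/2) y z) ^ 2 ∂μ' =
            ∫ z, (∫ w, ((1 + ‖w‖ ^ α) * k (t-1) z w) *
              ((1 + ‖w‖ ^ α) * k (1/2) y w) ∂μ') ^ 2 ∂μ' := by
          refine integral_congr_ae (Filter.Eventually.of_forall fun z => ?_)
          dsimp only
          rw [hgrep z]
        rw [hge]
        refine (hopnorm _ hf2 (t-1) hs).trans ?_
        refine mul_le_mul_of_nonneg_left ?_ (sq_nonneg _)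
        exact (hsq1 y).le.trans (hb1 y)
      -- combine
      have hsx : Real.sqrt (∫ z, ((1 + ‖z‖ ^ α) * k (1/2) x z) ^ 2 ∂μ') ≤
          Real.sqrt (a₁ * Real.exp a₂ * (ψ x * ψ x)) := Real.sqrt_le_sqrt hx2
      have hsy : Real.sqrt (∫ z, ((1 + ‖z‖ ^ α) * k ((t-1) + 1/2) y z) ^ 2 ∂μ') ≤
          Real.sqrt (Real.exp (lam0 * (t-1)) ^ 2 * (a₁ * Real.exp a₂ * (ψ y * ψ y))) :=
        Real.sqrt_le_sqrt hy2
      have hprod : Real.sqrt (a₁ * Real.exp a₂ * (ψ x * ψ x)) *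
          Real.sqrt (Real.exp (lam0 * (t-1)) ^ 2 * (a₁ * Real.exp a₂ * (ψ y * ψ y))) =
          Real.exp (lam0 * (t-1)) * (a₁ * Real.exp a₂) * (ψ x * ψ y) := by
        rw [← Real.sqrt_mul (mul_nonneg (by positivity) (mul_self_nonneg _))]
        rw [show a₁ * Real.exp a₂ * (ψ x * ψ x) *
            (Real.exp (lam0 * (t-1)) ^ 2 * (a₁ * Real.exp a₂ * (ψ y * ψ y))) =
            (Real.exp (lam0 * (t-1)) * (a₁ * Real.exp a₂) * (ψ x * ψ y)) ^ 2 by ring]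
        exact Real.sqrt_sq (mul_nonneg (by positivity)
          (mul_nonneg (hψpos x).le (hψpos y).le))
      have hstep : (1 + ‖y‖ ^ α) * k t x y ≤
          Real.exp (lam0 * (t-1)) * (a₁ * Real.exp a₂) * (ψ x * ψ y) := by
        rw [hrep, ← hprod]
        exact hCS.trans (mul_le_mul hsx hsy (Real.sqrt_nonneg _) (Real.sqrt_nonneg _))
      refine hstep.trans ?_
      have hcoef : Real.exp (lam0 * (t-1)) * (a₁ * Real.exp a₂) ≤
          a₁ * Real.exp (a₂ - lam0) * Real.exp (lam0 * t + a₂ * t ^ b') := by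
        have h0 : (0:ℝ) ≤ a₂ * t ^ b' := by positivity
        calc Real.exp (lam0 * (t-1)) * (a₁ * Real.exp a₂)
            = a₁ * Real.exp (lam0 * (t-1) + a₂) := by rw [Real.exp_add]; ring
          _ ≤ a₁ * Real.exp ((a₂ - lam0) + (lam0 * t + a₂ * t ^ b')) := by
              refine mul_le_mul_of_nonneg_left (Real.exp_le_exp.mpr ?_) ha₁.le
              nlinarith
          _ = a₁ * Real.exp (a₂ - lam0) * Real.exp (lam0 * t + a₂ * t ^ b') := by
              rw [Real.exp_add]; ring
      exact mul_le_mul_of_nonneg_right hcoef (mul_nonneg (hψpos x).le (hψpos y).le)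
  -- assemble the final statement
  refine ⟨a₁ * Real.exp (a₂ - lam0) * (C₂ * C₂), by positivity, a₂, ha₂, ?_⟩
  intro t ht x y hx hy
  have hk := key t ht x y
  have hψx := hψup x hx
  have hψy := hψup y hy
  have hΦy : (0:ℝ) ≤ C₂ * ‖y‖ ^ (-(((N : ℝ) - 1) / 2) - (β - α) / 4) *
      Real.exp (-(2 / (β - α + 2)) * ‖y‖ ^ ((β - α + 2) / 2)) := by positivity
  have hψprod : ψ x * ψ y ≤
      (C₂ * ‖x‖ ^ (-(((N : ℝ) - 1) / 2) - (β - α) / 4) *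
        Real.exp (-(2 / (β - α + 2)) * ‖x‖ ^ ((β - α + 2) / 2))) *
      (C₂ * ‖y‖ ^ (-(((N : ℝ) - 1) / 2) - (β - α) / 4) *
        Real.exp (-(2 / (β - α + 2)) * ‖y‖ ^ ((β - α + 2) / 2))) :=
    mul_le_mul hψx hψy (hψpos y).le (le_trans (hψpos x).le hψx)
  have hky : (1 + ‖y‖ ^ α) * k t x y ≤
      a₁ * Real.exp (a₂ - lam0) * Real.exp (lam0 * t + a₂ * t ^ b') *
      ((C₂ * ‖x‖ ^ (-(((N : ℝ) - 1) / 2) - (β - α) / 4) *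
        Real.exp (-(2 / (β - α + 2)) * ‖x‖ ^ ((β - α + 2) / 2))) *
      (C₂ * ‖y‖ ^ (-(((N : ℝ) - 1) / 2) - (β - α) / 4) *
        Real.exp (-(2 / (β - α + 2)) * ‖y‖ ^ ((β - α + 2) / 2)))) :=
    hk.trans (mul_le_mul_of_nonneg_left hψprod (by positivity))
  have hne : (1 + ‖y‖ ^ α) ≠ 0 := (hpos y).ne'
  calc k t x y = (1 + ‖y‖ ^ α)⁻¹ * ((1 + ‖y‖ ^ α) * k t x y) := by
        rw [inv_mul_cancel_left₀ hne]
    _ ≤ (1 + ‖y‖ ^ α)⁻¹ * (a₁ * Real.exp (a₂ - lam0) * Real.exp (lam0 * t + a₂ * t ^ b') *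
      ((C₂ * ‖x‖ ^ (-(((N : ℝ) - 1) / 2) - (β - α) / 4) *
        Real.exp (-(2 / (β - α + 2)) * ‖x‖ ^ ((β - α + 2) / 2))) *
      (C₂ * ‖y‖ ^ (-(((N : ℝ) - 1) / 2) - (β - α) / 4) *
        Real.exp (-(2 / (β - α + 2)) * ‖y‖ ^ ((β - α + 2) / 2))))) :=
        mul_le_mul_of_nonneg_left hky (inv_nonneg.mpr (hpos y).le)
    _ = a₁ * Real.exp (a₂ - lam0) * (C₂ * C₂) *
          Real.exp (lam0 * t + a₂ * t ^ b') *
          (‖x‖ ^ (-(((N : ℝ) - 1) / 2) - (β - α) / 4) *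
            Real.exp (-(2 / (β - α + 2)) * ‖x‖ ^ ((β - α + 2) / 2))) *
          ((1 + ‖y‖ ^ α)⁻¹ * ‖y‖ ^ (-(((N : ℝ) - 1) / 2) - (β - α) / 4) *
            Real.exp (-(2 / (β - α + 2)) * ‖y‖ ^ ((β - α + 2) / 2))) := by ring
end
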